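/- Let (S,T,F,M0,ℓ) be a Petri net, T⁺ ⊆ T a set of transitions such that F restricted to S ∪ T⁺ is acyclic, and S⁺ ⊆ S a set of places. Let M ∈ ℕ^{S⁺} be a marking supported in S⁺ and H ∈ ℕ^{T⁺} a finite multiset of transitions from T⁺ such that M + ⟦H⟧ ∈ ℕ^S. Then: (a) for every place s that is faithful w.r.t. T⁺ and S⁺, (M + ⟦H⟧)(s) · *s ≤ M; and (b) for every k ∈ ℕ and every transition t with (M + ⟦H⟧) [k·{t}⟩, one has k · *t ≤ M. -/

import Mathlib

open scoped Classical

/-- A labelled Petri net over the set `A` of visible actions (a transition labelled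
`none` is a τ-(internal) transition), with places drawn from the universe `P` and
transitions drawn from the universe `Tr`.  `pre t p` is the arc weight `F(p,t)` and
`post t p` is the arc weight `F(t,p)`. -/
structure PNet (P Tr A : Type) where
  places : Set P
  trans : Set Tr
  pre : Tr → P → ℕ
  post : Tr → P → ℕ
  M0 : P → ℕ
  l : Tr → Option A
  pre_wf : ∀ t p, pre t p ≠ 0 → t ∈ trans ∧ p ∈ places
  post_wf : ∀ t p, post t p ≠ 0 → t ∈ trans ∧ p ∈ places
  M0_wf : ∀ p, M0 p ≠ 0 → p ∈ places

namespace PNet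

variable {P Tr A : Type}

/-- `•G`, for a finite multiset `G` of transitions. -/
def preStep (N : PNet P Tr A) (G : Tr →₀ ℕ) : P → ℕ :=
  fun p => G.sum fun t n => n * N.pre t p

/-- `G•`, for a finite multiset `G` of transitions. -/
def postStep (N : PNet P Tr A) (G : Tr →₀ ℕ) : P → ℕ :=
  fun p => G.sum fun t n => n * N.post t p

/-- `M [G⟩ M'` : the (nonempty, finite) multiset `G` of transitions is a step from
`M` to `M'`. -/
def IsStep (N : PNet P Tr A) (M : P → ℕ) (G : Tr →₀ ℕ) (M' : P → ℕ) : Prop :=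
  G ≠ 0 ∧ ↑G.support ⊆ N.trans ∧ (∀ p, N.preStep G p ≤ M p) ∧
    ∀ p, M' p = M p - N.preStep G p + N.postStep G p

/-- `[M0⟩` : the set of reachable markings. -/
inductive Reachable (N : PNet P Tr A) : (P → ℕ) → Prop
  | refl : Reachable N N.M0
  | step {M G M'} : Reachable N M → N.IsStep M G M' → Reachable N M'

/-- The transition `t` is enabled under the marking `M`. -/
def enabled (N : PNet P Tr A) (M : P → ℕ) (t : Tr) : Prop :=
  t ∈ N.trans ∧ ∀ p, N.pre t p ≤ M p

/-- The concurrency relation `t ⌣ u`. -/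
def Conc (N : PNet P Tr A) (t u : Tr) : Prop :=
  t ∈ N.trans ∧ u ∈ N.trans ∧ ∃ M, N.Reachable M ∧ ∀ p, N.pre t p + N.pre u p ≤ M p

/-- Firing of a single transition: `M [\{t\}⟩ M'`. -/
def fire (N : PNet P Tr A) (M : P → ℕ) (t : Tr) (M' : P → ℕ) : Prop :=
  N.enabled M t ∧ ∀ p, M' p = M p - N.pre t p + N.post t p

/-- `M —τ→ M'`. -/
def tauFire (N : PNet P Tr A) (M M' : P → ℕ) : Prop :=
  ∃ t, N.l t = none ∧ N.fire M t M'

/-- `M —a→ M'` for a visible action `a`. -/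
def visFire (N : PNet P Tr A) (a : A) (M M' : P → ℕ) : Prop :=
  ∃ t, N.l t = some a ∧ N.fire M t M'

/-- `M ⟹ M'` : the reflexive-transitive closure of `—τ→`. -/
def Taus (N : PNet P Tr A) : (P → ℕ) → (P → ℕ) → Prop :=
  Relation.ReflTransGen N.tauFire

/-- `M ⟹σ⟹ M'` for a sequence `σ` of visible actions. -/
def seqReach (N : PNet P Tr A) : List A → (P → ℕ) → (P → ℕ) → Prop
  | [], M, M' => N.Taus M M'
  | a :: σ, M, M'' => ∃ M1 M2, N.Taus M M1 ∧ N.visFire a M1 M2 ∧ N.seqReach σ M2 M''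

/-- `ℓ(G)(a)` : the number of occurrences of the visible action `a` in the finite
multiset `G` of transitions. -/
noncomputable def labCount (N : PNet P Tr A) (G : Tr →₀ ℕ) (a : A) : ℕ :=
  ∑ t ∈ G.support, if N.l t = some a then G t else 0

/-- `ℓ(G)(a)` for a finite signed multiset `G` of transitions. -/
noncomputable def labCountZ (N : PNet P Tr A) (G : Tr →₀ ℤ) (a : A) : ℤ :=
  ∑ t ∈ G.support, if N.l t = some a then G t else 0

/-- `ℓ(G) ≡ ∅` : the signed multiset `G` contains no visible actions. -/
def SilentZ (N : PNet P Tr A) (G : Tr →₀ ℤ) : Prop := ∀ a, N.labCountZ G a = 0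

/-- The token replacement `⟦G⟧ = G• − •G` of a finite signed multiset of transitions. -/
noncomputable def tok (N : PNet P Tr A) (G : Tr →₀ ℤ) : P → ℤ :=
  fun p => ∑ t ∈ G.support, G t * ((N.post t p : ℤ) - (N.pre t p : ℤ))

/-- The token replacement `⟦G⟧ = G• − •G` of a finite multiset of transitions. -/
noncomputable def tokN (N : PNet P Tr A) (G : Tr →₀ ℕ) : P → ℤ :=
  fun p => ∑ t ∈ G.support, (G t : ℤ) * ((N.post t p : ℤ) - (N.pre t p : ℤ))

/-- `M —X→` : a step with multiset of visible labels `X ∈ ℕ^Act` is enabled in `M`. -/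
def stepTo (N : PNet P Tr A) (M : P → ℕ) (X : A → ℕ) : Prop :=
  ∃ G : Tr →₀ ℕ, G ≠ 0 ∧ ↑G.support ⊆ N.trans ∧ (∀ t ∈ G.support, N.l t ≠ none) ∧
    (∀ p, N.preStep G p ≤ M p) ∧ ∀ a, N.labCount G a = X a

/-- `⟨σ, X⟩` is a step ready pair of `N`. -/
def StepReadyPair (N : PNet P Tr A) (σ : List A) (X : Set (A → ℕ)) : Prop :=
  ∃ M, N.seqReach σ N.M0 M ∧ (∀ M', ¬ N.tauFire M M') ∧ X = {Y | N.stepTo M Y}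

/-- A net is plain iff its labelling is injective and no transition is labelled τ. -/
def Plain (N : PNet P Tr A) : Prop :=
  (∀ t ∈ N.trans, N.l t ≠ none) ∧
    ∀ t ∈ N.trans, ∀ u ∈ N.trans, N.l t = N.l u → t = u

/-- A structural conflict net: concurrent transitions have no common preplace. -/
def StructuralConflict (N : PNet P Tr A) : Prop :=
  ∀ t u, N.Conc t u → ∀ p, N.pre t p = 0 ∨ N.pre u p = 0

/-- A finitary net: every transition has a preplace, and every reachable marking is
finite and enables only finitely many transitions. -/
def Finitary (N : PNet P Tr A) : Prop :=
  (∀ t ∈ N.trans, ∃ p, N.pre t p ≠ 0) ∧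
    ∀ M, N.Reachable M → {p | M p ≠ 0}.Finite ∧ {t | N.enabled M t}.Finite

/-- `N` has a fully reachable pure M. -/
def FullyReachablePureM (N : PNet P Tr A) : Prop :=
  ∃ t u v : Tr, t ∈ N.trans ∧ u ∈ N.trans ∧ v ∈ N.trans ∧
    (∃ p, N.pre t p ≠ 0 ∧ N.pre u p ≠ 0) ∧
    (∃ p, N.pre u p ≠ 0 ∧ N.pre v p ≠ 0) ∧
    (∀ p, N.pre t p = 0 ∨ N.pre v p = 0) ∧
    ∃ M, N.Reachable M ∧ ∀ p, max (max (N.pre t p) (N.pre u p)) (N.pre v p) ≤ M p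

/-- `N` is distributed w.r.t. the distribution `D`. -/
def DistributedWrt (N : PNet P Tr A) {Loc : Type} (D : P ⊕ Tr → Loc) : Prop :=
  (∀ t p, N.pre t p ≠ 0 → D (Sum.inr t) = D (Sum.inl p)) ∧
    ∀ t u, N.Conc t u → D (Sum.inr t) ≠ D (Sum.inr u)

/-- `N` is a distributed net. -/
def Distributed (N : PNet P Tr A) : Prop :=
  ∃ (Loc : Type) (D : P ⊕ Tr → Loc), N.DistributedWrt D

/-- `N` is essentially distributed w.r.t. the distribution `D`. -/
def EssentiallyDistributedWrt (N : PNet P Tr A) {Loc : Type} (D : P ⊕ Tr → Loc) : Prop :=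
  (∀ t p, N.pre t p ≠ 0 → D (Sum.inr t) = D (Sum.inl p)) ∧
    ∀ t u, N.Conc t u → N.l t ≠ none → D (Sum.inr t) ≠ D (Sum.inr u)

def EssentiallyDistributed (N : PNet P Tr A) : Prop :=
  ∃ (Loc : Type) (D : P ⊕ Tr → Loc), N.EssentiallyDistributedWrt D

/-- `N` is externally distributed w.r.t. the distribution `D`. -/
def ExternallyDistributedWrt (N : PNet P Tr A) {Loc : Type} (D : P ⊕ Tr → Loc) : Prop :=
  (∀ t p, N.pre t p ≠ 0 → D (Sum.inr t) = D (Sum.inl p)) ∧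
    ∀ t u, N.Conc t u → N.l t ≠ none → N.l u ≠ none → D (Sum.inr t) ≠ D (Sum.inr u)

def ExternallyDistributed (N : PNet P Tr A) : Prop :=
  ∃ (Loc : Type) (D : P ⊕ Tr → Loc), N.ExternallyDistributedWrt D

/-- The generating relation of the canonical co-location relation: a transition is
co-located with each of its preplaces. -/
def canonGen (N : PNet P Tr A) : (P ⊕ Tr) → (P ⊕ Tr) → Prop :=
  fun x y => ∃ t p, x = Sum.inr t ∧ y = Sum.inl p ∧ N.pre t p ≠ 0

/-- The canonical co-location relation `≡_C`. -/
def canonRel (N : PNet P Tr A) : (P ⊕ Tr) → (P ⊕ Tr) → Prop :=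
  Relation.EqvGen N.canonGen

/-- The canonical distribution, mapping every net element to its `≡_C`-class. -/
def canonDist (N : PNet P Tr A) : (P ⊕ Tr) → Quot N.canonRel := Quot.mk _

/-- The flow relation `F` on `S ∪ T`. -/
def flow (N : PNet P Tr A) : P ⊕ Tr → P ⊕ Tr → ℕ
  | Sum.inl p, Sum.inr t => N.pre t p
  | Sum.inr t, Sum.inl p => N.post t p
  | _, _ => 0

/-- `F ↾ (S ∪ T⁺)` is acyclic. -/
def AcyclicOn (N : PNet P Tr A) (Tp : Set Tr) : Prop :=
  ∀ x : P ⊕ Tr, ¬ Relation.TransGen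
    (fun x y => N.flow x y ≠ 0 ∧ (∀ t, x = Sum.inr t → t ∈ Tp) ∧
      (∀ t, y = Sum.inr t → t ∈ Tp)) x x

/-- A path in `N`, as a nonempty alternating list of net elements. -/
def IsPathList (N : PNet P Tr A) (π : List (P ⊕ Tr)) : Prop :=
  π ≠ [] ∧ π.Chain' fun x y => N.flow x y ≠ 0

/-- The arc weight `F(π)` of a path `π`. -/
def pathWeight (N : PNet P Tr A) (π : List (P ⊕ Tr)) : ℕ :=
  ((π.zip π.tail).map fun q => N.flow q.1 q.2).prod

/-- A faithful place w.r.t. `T⁺` and `S⁺`, i.e. `|{s} ∩ S⁺| + ∑_{t ∈ T⁺} F(t,s) = 1`. -/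
def FaithfulPlace (N : PNet P Tr A) (Tp : Set Tr) (Sp : Set P) (s : P) : Prop :=
  (s ∈ Sp ∧ ∀ t ∈ Tp, N.post t s = 0) ∨
    (s ∉ Sp ∧ ∃ t ∈ Tp, N.post t s = 1 ∧ ∀ u ∈ Tp, u ≠ t → N.post u s = 0)

/-- A faithful path w.r.t. `T⁺` and `S⁺`: all nodes but the last are transitions
in `T⁺` or faithful places. -/
def FaithfulPath (N : PNet P Tr A) (Tp : Set Tr) (Sp : Set P) (π : List (P ⊕ Tr)) : Prop :=
  N.IsPathList π ∧ ∀ x ∈ π.dropLast,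
    (∃ t ∈ Tp, x = Sum.inr t) ∨ ∃ s, x = Sum.inl s ∧ N.FaithfulPlace Tp Sp s

/-- The multiset `*x` of faithful origins of a net element `x`, w.r.t. `T⁺` and `S⁺`. -/
noncomputable def faithOrig (N : PNet P Tr A) (Tp : Set Tr) (Sp : Set P) (x : P ⊕ Tr) :
    P → ℕ∞ :=
  fun s => sSup {w : ℕ∞ | ∃ π : List (P ⊕ Tr), s ∈ Sp ∧ N.FaithfulPath Tp Sp π ∧
    π.head? = some (Sum.inl s) ∧ π.getLast? = some x ∧ w = (N.pathWeight π : ℕ∞)}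

end PNet

/-- A labelled transition system over visible labels `L` (the invisible action τ is
represented by `none`). -/
structure LTS (St L : Type) where
  init : St
  tr : St → Option L → St → Prop

namespace LTS

variable {St L : Type}

/-- `⟹` : the reflexive-transitive closure of `—τ→`. -/
def Taus (Lt : LTS St L) : St → St → Prop :=
  Relation.ReflTransGen fun s s' => Lt.tr s none s'

/-- `s —(η)→ s'` : an `η`-transition that may stay put when `η = τ`. -/
def OptTr (Lt : LTS St L) (s : St) (η : Option L) (s' : St) : Prop :=
  Lt.tr s η s' ∨ (η = none ∧ s = s')

/-- The state `s` admits an infinite sequence of τ-transitions. -/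
def Diverges (Lt : LTS St L) (s : St) : Prop :=
  ∃ f : ℕ → St, f 0 = s ∧ ∀ n, Lt.tr (f n) none (f (n + 1))

def ReachableState (Lt : LTS St L) (s : St) : Prop :=
  Relation.ReflTransGen (fun x y => ∃ η, Lt.tr x η y) Lt.init s

/-- A deterministic LTS: no reachable state admits a τ-transition, and visible
transitions from reachable states are deterministic. -/
def Deterministic (Lt : LTS St L) : Prop :=
  ∀ s, Lt.ReachableState s →
    (∀ s', ¬ Lt.tr s none s') ∧
      ∀ a s' s'', Lt.tr s (some a) s' → Lt.tr s (some a) s'' → s' = s''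

end LTS

/-- `B` is a branching bisimulation between the two LTSs. -/
def IsBranchingBisim {St1 St2 L : Type} (L1 : LTS St1 L) (L2 : LTS St2 L)
    (B : St1 → St2 → Prop) : Prop :=
  B L1.init L2.init ∧
    (∀ s1 s2 η s1', B s1 s2 → L1.tr s1 η s1' →
      ∃ s2d s2', L2.Taus s2 s2d ∧ L2.OptTr s2d η s2' ∧ B s1 s2d ∧ B s1' s2') ∧
    ∀ s1 s2 η s2', B s1 s2 → L2.tr s2 η s2' →
      ∃ s1d s1', L1.Taus s1 s1d ∧ L1.OptTr s1d η s1' ∧ B s1d s2 ∧ B s1' s2'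

/-- The two LTSs are branching bisimilar. -/
def BranchingBisimilar {St1 St2 L : Type} (L1 : LTS St1 L) (L2 : LTS St2 L) : Prop :=
  ∃ B, IsBranchingBisim L1 L2 B

/-- The two LTSs are branching bisimilar with explicit divergence. -/
def BranchingBisimilarED {St1 St2 L : Type} (L1 : LTS St1 L) (L2 : LTS St2 L) : Prop :=
  ∃ B, IsBranchingBisim L1 L2 B ∧
    ∀ s1 s2, B s1 s2 → (L1.Diverges s1 ↔ L2.Diverges s2)

/-- The visible action phases `a⁺` and `a⁻ⁿ` (here `n` is the 0-based position of the
terminating transition in the sequence of transitions currently firing). -/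
inductive STLabel (A : Type) : Type
  | plus (a : A)
  | minus (a : A) (n : ℕ)

/-- The visible action phases `a⁺` and `a⁻` of split semantics. -/
inductive SplitLabel (A : Type) : Type
  | plus (a : A)
  | minus (a : A)

/-- The map `η ↦ η‾` from ST-action phases to split action phases. -/
def STLabel.bar {A : Type} : STLabel A → SplitLabel A
  | .plus a => .plus a
  | .minus a _ => .minus a

namespace PNet

variable {P Tr A : Type}

/-- The ST-transition relations between ST-markings. -/
def stTr (N : PNet P Tr A) :
    ((P → ℕ) × List Tr) → Option (STLabel A) → ((P → ℕ) × List Tr) → Prop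
  | s, some (STLabel.plus a), s' => ∃ t, N.l t = some a ∧ N.enabled s.1 t ∧
      (∀ p, s'.1 p = s.1 p - N.pre t p) ∧ s'.2 = s.2 ++ [t]
  | s, some (STLabel.minus a n), s' => ∃ t, s.2[n]? = some t ∧ N.l t = some a ∧
      s'.2 = s.2.eraseIdx n ∧ ∀ p, s'.1 p = s.1 p + N.post t p
  | s, none, s' => ∃ t, N.l t = none ∧ N.fire s.1 t s'.1 ∧ s'.2 = s.2

/-- The ST-LTS associated to a net. -/
def stLTS (N : PNet P Tr A) : LTS ((P → ℕ) × List Tr) (STLabel A) :=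
  ⟨(N.M0, []), N.stTr⟩

/-- The split transition relations between split markings. -/
def splitTr (N : PNet P Tr A) :
    ((P → ℕ) × Multiset Tr) → Option (SplitLabel A) → ((P → ℕ) × Multiset Tr) → Prop
  | s, some (SplitLabel.plus a), s' => ∃ t, N.l t = some a ∧ N.enabled s.1 t ∧
      (∀ p, s'.1 p = s.1 p - N.pre t p) ∧ s'.2 = s.2 + {t}
  | s, some (SplitLabel.minus a), s' => ∃ t, N.l t = some a ∧ s.2 = s'.2 + {t} ∧
      ∀ p, s'.1 p = s.1 p + N.post t p
  | s, none, s' => ∃ t, N.l t = none ∧ N.fire s.1 t s'.1 ∧ s'.2 = s.2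

/-- The split LTS associated to a net. -/
def splitLTS (N : PNet P Tr A) : LTS ((P → ℕ) × Multiset Tr) (SplitLabel A) :=
  ⟨(N.M0, 0), N.splitTr⟩

end PNet

/-- `N1 ≈Δ_bSTb N2` : branching ST-bisimilarity with explicit divergence. -/
def BranchingSTBisimilarED {P1 T1 P2 T2 A : Type}
    (N1 : PNet P1 T1 A) (N2 : PNet P2 T2 A) : Prop :=
  BranchingBisimilarED N1.stLTS N2.stLTS

/-- `N1 ≈R N2` : step readiness equivalence. -/
def StepReadinessEquiv {P1 T1 P2 T2 A : Type}
    (N1 : PNet P1 T1 A) (N2 : PNet P2 T2 A) : Prop :=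
  ∀ σ X, N1.StepReadyPair σ X ↔ N2.StepReadyPair σ X

/-- A component with interface `(I, O)`. -/
structure NetComponent (P Tr A : Type) where
  net : PNet P Tr A
  I : Set P
  O : Set P
  I_sub : I ⊆ net.places
  O_sub : O ⊆ net.places
  disjIO : Disjoint I O
  O_noPost : ∀ p ∈ O, ∀ t, net.pre t p = 0

/-- A sequential component with interface: some set `Q` of private places carries
exactly one token initially, and every transition consumes and produces exactly one
token in `Q`. -/
def NetComponent.Sequential {P Tr A : Type} (C : NetComponent P Tr A) : Prop :=
  ∃ Q : Set P, Q ⊆ C.net.places \ (C.I ∪ C.O) ∧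
    (∀ t ∈ C.net.trans,
      (∃ q ∈ Q, C.net.pre t q = 1 ∧ ∀ q' ∈ Q, q' ≠ q → C.net.pre t q' = 0) ∧
        ∃ q ∈ Q, C.net.post t q = 1 ∧ ∀ q' ∈ Q, q' ≠ q → C.net.post t q' = 0) ∧
    ∃ q ∈ Q, C.net.M0 q = 1 ∧ ∀ q' ∈ Q, q' ≠ q → C.net.M0 q' = 0

/-- The components of the family `C` are pairwise composable: disjoint except for
shared interface places, and with pairwise disjoint sets of input places. -/
def Composable {K P Tr A : Type} (C : K → NetComponent P Tr A) : Prop :=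
  (∀ k l, k ≠ l → Disjoint (C k).net.trans (C l).net.trans) ∧
    (∀ k l, k ≠ l →
      (C k).net.places ∩ (C l).net.places =
        ((C k).I ∪ (C k).O) ∩ ((C l).I ∪ (C l).O)) ∧
    ∀ k l, k ≠ l → Disjoint (C k).I (C l).I

/-- `D = ‖_{k ∈ K} C k` : `D` is the asynchronous parallel composition of the
family `C` of components. -/
structure IsParComp {K P Tr A : Type} (C : K → NetComponent P Tr A)
    (D : NetComponent P Tr A) : Prop where
  places_eq : D.net.places = ⋃ k, (C k).net.places
  trans_eq : D.net.trans = ⋃ k, (C k).net.trans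
  pre_eq : ∀ k, ∀ t ∈ (C k).net.trans, ∀ p, D.net.pre t p = (C k).net.pre t p
  post_eq : ∀ k, ∀ t ∈ (C k).net.trans, ∀ p, D.net.post t p = (C k).net.post t p
  M0_eq : ∀ p, D.net.M0 p = finsum fun k => (C k).net.M0 p
  l_eq : ∀ k, ∀ t ∈ (C k).net.trans, D.net.l t = (C k).net.l t
  I_eq : D.I = ⋃ k, (C k).I
  O_eq : D.O = (⋃ k, (C k).O) \ ⋃ k, (C k).I

/-- An LSGA net: an asynchronous parallel composition of sequential components
with interface. -/
def IsLSGA {P Tr A : Type} (N : PNet P Tr A) : Prop :=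
  ∃ (K : Type) (C : K → NetComponent P Tr A) (D : NetComponent P Tr A),
    Composable C ∧ (∀ k, (C k).Sequential) ∧ IsParComp C D ∧ D.net = N
section FaithfulOriginsAux

variable {P Tr A : Type}

private lemma fo_exists_maximal {α : Type} (r : α → α → Prop)
    (htr : ∀ a b c, r a b → r b c → r a c) (hirr : ∀ a, ¬ r a a)
    (s : Finset α) : s.Nonempty → ∃ v ∈ s, ∀ t ∈ s, ¬ r v t := by
  classical
  induction s using Finset.induction_on with
  | empty => simp
  | @insert a s' ha ih =>
    intro _
    rcases s'.eq_empty_or_nonempty with rfl | hs'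
    · exact ⟨a, by simp, by simpa using hirr a⟩
    · obtain ⟨m, hm, hmax⟩ := ih hs'
      by_cases hma : r m a
      · refine ⟨a, Finset.mem_insert_self _ _, ?_⟩
        intro t ht hat
        rcases Finset.mem_insert.mp ht with rfl | ht'
        · exact hirr t hat
        · exact hmax t ht' (htr _ _ _ hma hat)
      · refine ⟨m, Finset.mem_insert_of_mem hm, ?_⟩
        intro t ht hmt
        rcases Finset.mem_insert.mp ht with rfl | ht'
        · exact hma hmt
        · exact hmax t ht' hmt

private lemma fo_pathWeight_nil (N : PNet P Tr A) : N.pathWeight [] = 1 := rfl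

private lemma fo_pathWeight_single (N : PNet P Tr A) (x : P ⊕ Tr) :
    N.pathWeight [x] = 1 := rfl

private lemma fo_pathWeight_cons_cons (N : PNet P Tr A) (x y : P ⊕ Tr) (l : List (P ⊕ Tr)) :
    N.pathWeight (x :: y :: l) = N.flow x y * N.pathWeight (y :: l) := by
  simp [PNet.pathWeight]

private lemma fo_pathWeight_concat (N : PNet P Tr A) :
    ∀ (l : List (P ⊕ Tr)) (hl : l ≠ []) (x : P ⊕ Tr),
      N.pathWeight (l ++ [x]) = N.pathWeight l * N.flow (l.getLast hl) x := by
  intro l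
  induction l with
  | nil => intro h; exact absurd rfl h
  | cons a l ih =>
    intro _ x
    cases l with
    | nil =>
      simp [fo_pathWeight_cons_cons, fo_pathWeight_single]
    | cons b l' =>
      have h1 : (a :: b :: l') ++ [x] = a :: ((b :: l') ++ [x]) := rfl
      rw [h1, show ((b :: l') ++ [x]) = b :: (l' ++ [x]) from rfl,
        fo_pathWeight_cons_cons, show b :: (l' ++ [x]) = (b :: l') ++ [x] from rfl,
        ih (by simp) x, fo_pathWeight_cons_cons,
        List.getLast_cons (a := a) (l := b :: l') (by simp)]
      ring

private lemma fo_head?_append (l l' : List (P ⊕ Tr)) (h : l ≠ []) :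
    (l ++ l').head? = l.head? := by
  cases l with
  | nil => exact absurd rfl h
  | cons a t => rfl

private lemma fo_snoc (N : PNet P Tr A) {Tp : Set Tr} {Sp : Set P}
    {π : List (P ⊕ Tr)} (hπ : N.FaithfulPath Tp Sp π) (hlen : 2 ≤ π.length) :
    ∃ (π' : List (P ⊕ Tr)) (y x : P ⊕ Tr),
      π = π' ++ [x] ∧ N.FaithfulPath Tp Sp π' ∧ π'.head? = π.head? ∧
      π'.getLast? = some y ∧ π.getLast? = some x ∧ N.flow y x ≠ 0 ∧
      ((∃ t ∈ Tp, y = Sum.inr t) ∨ ∃ s, y = Sum.inl s ∧ N.FaithfulPlace Tp Sp s) ∧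
      N.pathWeight π = N.pathWeight π' * N.flow y x := by
  obtain ⟨⟨hne, hchain⟩, hfaith⟩ := hπ
  have hπ'ne : π.dropLast ≠ [] := by
    have h1 := List.length_dropLast (xs := π)
    intro h; rw [h] at h1; simp at h1; omega
  have hpi : π = π.dropLast ++ [π.getLast hne] := (List.dropLast_append_getLast hne).symm
  have hylast : π.dropLast.getLast? = some (π.dropLast.getLast hπ'ne) :=
    List.getLast?_eq_getLast hπ'ne
  have hchain2 : List.Chain' (fun x y => N.flow x y ≠ 0) (π.dropLast ++ [π.getLast hne]) := by
    rw [← hpi]; exact hchain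
  rw [List.Chain', List.isChain_append] at hchain2
  obtain ⟨hc1, _, hrel⟩ := hchain2
  have hflow : N.flow (π.dropLast.getLast hπ'ne) (π.getLast hne) ≠ 0 :=
    hrel _ hylast _ rfl
  refine ⟨π.dropLast, π.dropLast.getLast hπ'ne, π.getLast hne, hpi,
    ⟨⟨hπ'ne, hc1⟩, ?_⟩, ?_, hylast, List.getLast?_eq_getLast hne, hflow, ?_, ?_⟩
  · intro z hz
    exact hfaith z ((List.dropLast_sublist π.dropLast).subset hz)
  · conv_rhs => rw [hpi]
    exact (fo_head?_append _ _ hπ'ne).symm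
  · exact hfaith _ (List.getLast_mem hπ'ne)
  · conv_lhs => rw [hpi]
    exact fo_pathWeight_concat N π.dropLast hπ'ne _

private lemma fo_tokN_eq (N : PNet P Tr A) (G : Tr →₀ ℕ) (p : P) :
    N.tokN G p = G.sum fun t n => (n : ℤ) * ((N.post t p : ℤ) - (N.pre t p : ℤ)) := rfl

private lemma fo_tokN_add (N : PNet P Tr A) (G1 G2 : Tr →₀ ℕ) (p : P) :
    N.tokN (G1 + G2) p = N.tokN G1 p + N.tokN G2 p := by
  simp only [fo_tokN_eq]
  exact Finsupp.sum_add_index' (by simp) (by intros; push_cast; ring)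

private lemma fo_tokN_single (N : PNet P Tr A) (v : Tr) (m : ℕ) (p : P) :
    N.tokN (Finsupp.single v m) p = (m : ℤ) * ((N.post v p : ℤ) - (N.pre v p : ℤ)) := by
  rw [fo_tokN_eq]
  exact Finsupp.sum_single_index (by simp)

private lemma fo_card_add (G1 G2 : Tr →₀ ℕ) :
    ((G1 + G2).sum fun _ k => k) = (G1.sum fun _ k => k) + (G2.sum fun _ k => k) :=
  Finsupp.sum_add_index' (fun _ => rfl) (fun _ _ _ => rfl)

private lemma fo_card_single (v : Tr) (m : ℕ) :
    ((Finsupp.single v m).sum fun _ k => k) = m :=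
  Finsupp.sum_single_index rfl

private lemma fo_core (N : PNet P Tr A) (Tp : Set Tr) (Sp : Set P)
    (hacyc : N.AcyclicOn Tp) :
    ∀ (n : ℕ) (H : Tr →₀ ℕ), (H.sum fun _ k => k) = n →
    ∀ (M MH : P → ℕ), (∀ p, M p ≠ 0 → p ∈ Sp) → (↑H.support ⊆ Tp) →
    (∀ p, (MH p : ℤ) = (M p : ℤ) + N.tokN H p) →
    ∀ (L : ℕ) (π : List (P ⊕ Tr)), π.length ≤ L → N.FaithfulPath Tp Sp π →
    ∀ p : P, π.head? = some (Sum.inl p) → p ∈ Sp →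
      ((∀ s, π.getLast? = some (Sum.inl s) → N.FaithfulPlace Tp Sp s →
          MH s * N.pathWeight π ≤ M p) ∧
        (∀ (k : ℕ) (t : Tr), π.getLast? = some (Sum.inr t) →
          (∀ q, k * N.pre t q ≤ MH q) → k * N.pathWeight π ≤ M p)) := by
  intro n
  induction n using Nat.strong_induction_on with
  | _ n IHn =>
  intro H hn M MH hM hH hMH L
  induction L with
  | zero =>
    intro π hlen _ p hhead _
    have hnil : π = [] := List.length_eq_zero_iff.mp (Nat.le_zero.mp hlen)
    subst hnil; simp at hhead
  | succ L IHL =>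
    intro π hlen hfaith p hhead hp
    have hne : π ≠ [] := hfaith.1.1
    constructor
    · -- (A) last node is a faithful place s
      intro s hlast hsf
      rcases hsf with ⟨hsSp, hpost0⟩ | ⟨hsnot, t0, ht0Tp, ht0post, ht0uniq⟩
      · -- s ∈ Sp : path must be a single node
        have hπs : π = [Sum.inl s] := by
          rcases Nat.lt_or_ge π.length 2 with h2 | h2
          · obtain ⟨a, rfl⟩ : ∃ a, π = [a] := by
              cases π with
              | nil => exact absurd rfl hne
              | cons a t =>
                cases t with
                | nil => exact ⟨a, rfl⟩
                | cons b t' => simp only [List.length_cons] at h2; omega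
            rw [List.getLast?_singleton] at hlast
            rw [Option.some.injEq] at hlast
            rw [hlast]
          · exfalso
            obtain ⟨π', y, x, hpi, _, _, hylast, hxlast, hflow, hy, _⟩ :=
              fo_snoc N hfaith h2
            rw [hlast] at hxlast
            obtain rfl : Sum.inl s = x := Option.some.inj hxlast
            rcases hy with ⟨u, huTp, rfl⟩ | ⟨s', rfl, _⟩
            · exact hflow (hpost0 u huTp)
            · exact hflow rfl
        subst hπs
        rw [List.head?_cons, Option.some.injEq] at hhead
        obtain rfl : p = s := by
          injection hhead.symm
        have htok : N.tokN H p ≤ 0 := by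
          rw [fo_tokN_eq]
          apply Finset.sum_nonpos
          intro t ht
          show (H t : ℤ) * ((N.post t p : ℤ) - (N.pre t p : ℤ)) ≤ 0
          rw [hpost0 t (hH ht)]
          simp only [Nat.cast_zero, zero_sub, mul_neg]
          simpa using mul_nonneg (Int.natCast_nonneg (H t)) (Int.natCast_nonneg (N.pre t p))
        have h1 := hMH p
        have h2 : MH p ≤ M p := by
          have : (MH p : ℤ) ≤ (M p : ℤ) := by omega
          exact_mod_cast this
        rw [fo_pathWeight_single, mul_one]
        exact h2
      · -- s ∉ Sp
        have h2 : 2 ≤ π.length := by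
          rcases π with _ | ⟨a, _ | ⟨b, l⟩⟩
          · exact absurd rfl hne
          · exfalso
            rw [List.head?_cons, Option.some.injEq] at hhead
            rw [List.getLast?_singleton, Option.some.injEq] at hlast
            rw [hlast] at hhead
            obtain rfl : p = s := by injection hhead.symm
            exact hsnot hp
          · simp only [List.length_cons]; omega
        obtain ⟨π', y, x, hpi, hfaith', hhead', hylast, hxlast, hflow, hy, hweight⟩ :=
          fo_snoc N hfaith h2
        rw [hlast] at hxlast
        obtain rfl : Sum.inl s = x := Option.some.inj hxlast
        obtain ⟨u, huTp, rfl⟩ : ∃ u ∈ Tp, y = Sum.inr u := by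
          rcases hy with ⟨u, huTp, rfl⟩ | ⟨s', rfl, _⟩
          · exact ⟨u, huTp, rfl⟩
          · exact absurd rfl hflow
        have hpost : N.post u s ≠ 0 := hflow
        obtain rfl : t0 = u := by
          by_contra h
          exact hpost (ht0uniq u huTp fun he => h he.symm)
        rw [show N.flow (Sum.inr t0) (Sum.inl s) = N.post t0 s from rfl, ht0post,
          mul_one] at hweight
        have hMs : M s = 0 := by
          by_contra h; exact hsnot (hM s h)
        have htokle : N.tokN H s ≤ (H t0 : ℤ) := by
          have hstep1 : N.tokN H s ≤ ∑ t ∈ H.support, (H t : ℤ) * (N.post t s : ℤ) := by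
            rw [fo_tokN_eq]
            apply Finset.sum_le_sum
            intro t _
            show (H t : ℤ) * ((N.post t s : ℤ) - (N.pre t s : ℤ))
              ≤ (H t : ℤ) * (N.post t s : ℤ)
            nlinarith [mul_nonneg (Int.natCast_nonneg (H t)) (Int.natCast_nonneg (N.pre t s))]
          have hstep2 : ∑ t ∈ H.support, (H t : ℤ) * (N.post t s : ℤ) = (H t0 : ℤ) := by
            rw [Finset.sum_eq_single t0]
            · rw [ht0post]; simp
            · intro b hb hbne
              rw [ht0uniq b (hH hb) hbne]; simp
            · intro h
              rw [Finsupp.notMem_support_iff.mp h]; simp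
          omega
        have hmle : MH s ≤ H t0 := by
          have h1 := hMH s
          rw [hMs] at h1
          have : (MH s : ℤ) ≤ (H t0 : ℤ) := by omega
          exact_mod_cast this
        by_cases hm0 : MH s = 0
        · rw [hm0]; simp
        · have ht0supp : t0 ∈ H.support := Finsupp.mem_support_iff.2 (by omega)
          obtain ⟨v, hvsupp, hvmax⟩ := fo_exists_maximal
            (fun v t => Relation.TransGen
              (fun x y => N.flow x y ≠ 0 ∧ (∀ t, x = Sum.inr t → t ∈ Tp) ∧
                (∀ t, y = Sum.inr t → t ∈ Tp)) (Sum.inr v) (Sum.inr t))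
            (fun _ _ _ hab hbc => hab.trans hbc) (fun a h => hacyc (Sum.inr a) h)
            H.support ⟨t0, ht0supp⟩
          have hvTp : v ∈ Tp := hH hvsupp
          have hkey : ∀ q, N.post v q ≠ 0 → ∀ t ∈ H.support, N.pre t q = 0 := by
            intro q hq t ht
            by_contra hpre
            have e1 : N.flow (Sum.inr v) (Sum.inl q) ≠ 0 ∧
                (∀ t', (Sum.inr v : P ⊕ Tr) = Sum.inr t' → t' ∈ Tp) ∧
                (∀ t', (Sum.inl q : P ⊕ Tr) = Sum.inr t' → t' ∈ Tp) := by
              refine ⟨hq, ?_, ?_⟩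
              · intro t' h'
                obtain rfl : v = t' := by injection h'
                exact hvTp
              · intro t' h'; exact absurd h' (by simp)
            have e2 : N.flow (Sum.inl q) (Sum.inr t) ≠ 0 ∧
                (∀ t', (Sum.inl q : P ⊕ Tr) = Sum.inr t' → t' ∈ Tp) ∧
                (∀ t', (Sum.inr t : P ⊕ Tr) = Sum.inr t' → t' ∈ Tp) := by
              refine ⟨hpre, ?_, ?_⟩
              · intro t' h'; exact absurd h' (by simp)
              · intro t' h'
                obtain rfl : t = t' := by injection h'
                exact hH ht
            exact hvmax t ht (Relation.TransGen.head e1 (Relation.TransGen.single e2))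
          have hbound : ∀ q, H v * N.post v q ≤ MH q := by
            intro q
            rcases Nat.eq_zero_or_pos (N.post v q) with h0 | hposq
            · simp [h0]
            · have hpre0 : ∀ t ∈ H.support, N.pre t q = 0 := hkey q (by omega)
              have hterm : ∀ t ∈ H.support,
                  (0 : ℤ) ≤ (H t : ℤ) * ((N.post t q : ℤ) - (N.pre t q : ℤ)) := by
                intro t ht
                rw [hpre0 t ht]
                simp only [Nat.cast_zero, sub_zero]
                positivity
              have h1 : (H v : ℤ) * ((N.post v q : ℤ) - (N.pre v q : ℤ)) ≤ N.tokN H q := by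
                rw [fo_tokN_eq]
                exact Finset.single_le_sum hterm hvsupp
              rw [hpre0 v hvsupp] at h1
              have h2 := hMH q
              have h3 : ((H v * N.post v q : ℕ) : ℤ) ≤ (MH q : ℤ) := by
                push_cast at h1 ⊢
                linarith [Int.natCast_nonneg (M q)]
              exact_mod_cast h3
          by_cases hvu : v = t0
          · -- unfire m = MH s copies of v = t0, continue along π' ending in t0
            obtain rfl : v = t0 := hvu
            have hsingle_le : Finsupp.single v (MH s) ≤ H := Finsupp.single_le_iff.2 hmle
            have hsplit : H - Finsupp.single v (MH s) + Finsupp.single v (MH s) = H :=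
              tsub_add_cancel_of_le hsingle_le
            have hsum' : ((H - Finsupp.single v (MH s)).sum fun _ k => k) < n := by
              have he : (H.sum fun _ k => k)
                  = ((H - Finsupp.single v (MH s)).sum fun _ k => k) + MH s := by
                conv_lhs => rw [← hsplit]
                rw [fo_card_add, fo_card_single]
              omega
            have hsub : ∀ q, MH s * N.post v q ≤ MH q := fun q =>
              le_trans (mul_le_mul_left hmle _) (hbound q)
            have hMH'eq : ∀ q, (((MH q - MH s * N.post v q) + MH s * N.pre v q : ℕ) : ℤ)
                = (M q : ℤ) + N.tokN (H - Finsupp.single v (MH s)) q := by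
              intro q
              have h1 : N.tokN H q = N.tokN (H - Finsupp.single v (MH s)) q
                  + (MH s : ℤ) * ((N.post v q : ℤ) - (N.pre v q : ℤ)) := by
                conv_lhs => rw [← hsplit]
                rw [fo_tokN_add, fo_tokN_single]
              have h2 := hMH q
              have h3 := hsub q
              push_cast [h3]
              push_cast at h1 h2
              linarith
            have hsupp' : ↑(H - Finsupp.single v (MH s)).support ⊆ Tp := by
              intro t ht
              exact hH (Finsupp.support_tsub ht)
            have hres := (IHn _ hsum' (H - Finsupp.single v (MH s)) rfl M
              (fun q => (MH q - MH s * N.post v q) + MH s * N.pre v q) hM hsupp' hMH'eq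
              π'.length π' le_rfl hfaith' p (hhead'.trans hhead) hp).2 (MH s) v hylast
              (fun q => Nat.le_add_left _ _)
            rw [hweight]
            exact hres
          · -- unfire one copy of v ≠ t0 and use the same path
            have h1le : 1 ≤ H v := Nat.one_le_iff_ne_zero.2 (Finsupp.mem_support_iff.1 hvsupp)
            have hsingle_le : Finsupp.single v 1 ≤ H := Finsupp.single_le_iff.2 h1le
            have hsplit : H - Finsupp.single v 1 + Finsupp.single v 1 = H :=
              tsub_add_cancel_of_le hsingle_le
            have hsum' : ((H - Finsupp.single v 1).sum fun _ k => k) < n := by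
              have he : (H.sum fun _ k => k)
                  = ((H - Finsupp.single v 1).sum fun _ k => k) + 1 := by
                conv_lhs => rw [← hsplit]
                rw [fo_card_add, fo_card_single]
              omega
            have hsub : ∀ q, 1 * N.post v q ≤ MH q := fun q =>
              le_trans (mul_le_mul_left h1le _) (hbound q)
            have hMH'eq : ∀ q, (((MH q - 1 * N.post v q) + 1 * N.pre v q : ℕ) : ℤ)
                = (M q : ℤ) + N.tokN (H - Finsupp.single v 1) q := by
              intro q
              have h1 : N.tokN H q = N.tokN (H - Finsupp.single v 1) q
                  + (1 : ℤ) * ((N.post v q : ℤ) - (N.pre v q : ℤ)) := by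
                conv_lhs => rw [← hsplit]
                rw [fo_tokN_add, fo_tokN_single]
                push_cast
                ring
              have h2 := hMH q
              have h3 := hsub q
              push_cast [h3]
              push_cast at h1 h2
              linarith
            have hsupp' : ↑(H - Finsupp.single v 1).support ⊆ Tp := by
              intro t ht
              exact hH (Finsupp.support_tsub ht)
            have hres := (IHn _ hsum' (H - Finsupp.single v 1) rfl M
              (fun q => (MH q - 1 * N.post v q) + 1 * N.pre v q) hM hsupp' hMH'eq
              π.length π le_rfl hfaith p hhead hp).1 s hlast
              (Or.inr ⟨hsnot, t0, ht0Tp, ht0post, ht0uniq⟩)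
            have hpv : N.post v s = 0 := ht0uniq v hvTp hvu
            have hle2 : MH s ≤ (MH s - 1 * N.post v s) + 1 * N.pre v s := by
              rw [hpv]; omega
            exact le_trans (mul_le_mul_left hle2 _) hres
    · -- (B) last node is a transition t
      intro k t hlast hk
      have h2 : 2 ≤ π.length := by
        rcases π with _ | ⟨a, _ | ⟨b, l⟩⟩
        · exact absurd rfl hne
        · exfalso
          rw [List.head?_cons, Option.some.injEq] at hhead
          rw [List.getLast?_singleton, Option.some.injEq] at hlast
          rw [hlast] at hhead
          exact absurd hhead (by simp)
        · simp only [List.length_cons]; omega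
      obtain ⟨π', y, x, hpi, hfaith', hhead', hylast, hxlast, hflow, hy, hweight⟩ :=
        fo_snoc N hfaith h2
      rw [hlast] at hxlast
      obtain rfl : Sum.inr t = x := Option.some.inj hxlast
      obtain ⟨s, rfl, hsf⟩ : ∃ s, y = Sum.inl s ∧ N.FaithfulPlace Tp Sp s := by
        rcases hy with ⟨u, _, rfl⟩ | ⟨s, rfl, hsf⟩
        · exact absurd rfl hflow
        · exact ⟨s, rfl, hsf⟩
      have hlen' : π'.length ≤ L := by
        have hl1 : π.length = π'.length + 1 := by rw [hpi]; simp
        omega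
      have hres := (IHL π' hlen' hfaith' p (hhead'.trans hhead) hp).1 s hylast hsf
      rw [hweight, show N.flow (Sum.inl s) (Sum.inr t) = N.pre t s from rfl]
      calc k * (N.pathWeight π' * N.pre t s) = (k * N.pre t s) * N.pathWeight π' := by ring
        _ ≤ MH s * N.pathWeight π' := mul_le_mul_left (hk s) _
        _ ≤ M p := hres

private lemma fo_mul_sSup_le {c b : ℕ} {S : Set ℕ∞} (h : ∀ w ∈ S, (c : ℕ∞) * w ≤ (b : ℕ∞)) :
    (c : ℕ∞) * sSup S ≤ (b : ℕ∞) := by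
  rcases Nat.eq_zero_or_pos c with rfl | hc
  · simp
  · have hS : ∀ w ∈ S, w ≤ ((b / c : ℕ) : ℕ∞) := by
      intro w hw
      have hb := h w hw
      have hwt : w ≠ ⊤ := by
        rintro rfl
        rw [ENat.mul_top (by exact_mod_cast hc.ne' : (c : ℕ∞) ≠ 0)] at hb
        exact ENat.coe_ne_top b (top_le_iff.mp hb)
      lift w to ℕ using hwt
      rw [← Nat.cast_mul] at hb
      have hb' : c * w ≤ b := by exact_mod_cast hb
      exact_mod_cast (Nat.le_div_iff_mul_le hc).2 (by rw [Nat.mul_comm]; exact hb')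
    calc (c : ℕ∞) * sSup S ≤ (c : ℕ∞) * ((b / c : ℕ) : ℕ∞) :=
        mul_le_mul_right (sSup_le hS) _
      _ = ((c * (b / c) : ℕ) : ℕ∞) := by rw [Nat.cast_mul]
      _ ≤ (b : ℕ∞) := by
          have hd : c * (b / c) ≤ b := by
            rw [mul_comm]; exact Nat.div_mul_le_self b c
          exact_mod_cast hd

end FaithfulOriginsAux
/-- the lemma on faithful origins: tokens in faithful places, and
enabled transitions, can be traced back to the original marking `M`. -/
theorem faithful_origins {P Tr A : Type} (N : PNet P Tr A)
    (Tp : Set Tr) (Sp : Set P) (hTp : Tp ⊆ N.trans) (hSp : Sp ⊆ N.places)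
    (hacyc : N.AcyclicOn Tp)
    (M : P → ℕ) (hM : ∀ p, M p ≠ 0 → p ∈ Sp)
    (H : Tr →₀ ℕ) (hH : ↑H.support ⊆ Tp)
    (MH : P → ℕ) (hMH : ∀ p, (MH p : ℤ) = (M p : ℤ) + N.tokN H p) :
    (∀ s, N.FaithfulPlace Tp Sp s →
      ∀ p, (MH s : ℕ∞) * N.faithOrig Tp Sp (Sum.inl s) p ≤ (M p : ℕ∞)) ∧
    ∀ (k : ℕ) (t : Tr), t ∈ N.trans → (∀ p, k * N.pre t p ≤ MH p) →
      ∀ p, (k : ℕ∞) * N.faithOrig Tp Sp (Sum.inr t) p ≤ (M p : ℕ∞) := by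
  have core := fo_core N Tp Sp hacyc (H.sum fun _ k => k) H rfl M MH hM hH hMH
  constructor
  · intro s hs p
    rw [PNet.faithOrig]
    refine fo_mul_sSup_le ?_
    rintro w ⟨π, hpSp, hfaith, hhead, hlast, rfl⟩
    rw [← Nat.cast_mul]
    exact_mod_cast Nat.cast_le.mpr
      ((core π.length π le_rfl hfaith p hhead hpSp).1 s hlast hs)
  · intro k t _ hk p
    rw [PNet.faithOrig]
    refine fo_mul_sSup_le ?_
    rintro w ⟨π, hpSp, hfaith, hhead, hlast, rfl⟩
    rw [← Nat.cast_mul]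
    exact_mod_cast Nat.cast_le.mpr
      ((core π.length π le_rfl hfaith p hhead hpSp).2 k t hlast hk)
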